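/- arXiv:1811.07822 — 2 statements merged into one kernel-verified Lean document; each statement's English description precedes it below -/
import Mathlib

section
/- Let a > 0 and let f ∈ C²([0,1)) be the unique solution of the profile equation on (0,1) with f(0) = a, f'(0) = 0. Then the limits of f, f' and f'' as x → 1⁻ exist and satisfy: 0 < lim_{x→1} f(x) < a, -∞ < lim_{x→1} f'(x) < 0, and -∞ < lim_{x→1} f''(x) < 0. -/
open Set Filter Topology

/-- `f ∈ C²(S)` solves the profile equation
`f''(x) = (1 + f'(x)²)[f'(x)(x - 1/x) - f(x)]` for `x ∈ S \ {0}`,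
with initial data `f(0) = a`, `f'(0) = 0`. -/
def SolvesProfile (a : ℝ) (S : Set ℝ) (f : ℝ → ℝ) : Prop :=
  ContDiffOn ℝ 2 f S ∧ f 0 = a ∧ derivWithin f S 0 = 0 ∧
  ∀ x ∈ S, x ≠ 0 →
    derivWithin (derivWithin f S) S x
      = (1 + (derivWithin f S x) ^ 2) * (derivWithin f S x * (x - 1 / x) - f x)


private lemma aux_nonpos_of_left_min {φ : ℝ → ℝ} {v x0 c : ℝ} (hc : c < x0)
    (hd : HasDerivAt φ v x0) (hmin : ∀ y ∈ Set.Ioo c x0, φ x0 ≤ φ y) : v ≤ 0 := by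
  have hne : (𝓝[Set.Ioo c x0 \ {x0}] x0).NeBot := by
    rw [Set.diff_singleton_eq_self (by simp)]
    rw [← mem_closure_iff_nhdsWithin_neBot, closure_Ioo hc.ne]
    exact ⟨hc.le, le_refl _⟩
  have hs := hasDerivWithinAt_iff_tendsto_slope.1 (hd.hasDerivWithinAt (s := Set.Ioo c x0))
  refine le_of_tendsto hs ?_
  filter_upwards [self_mem_nhdsWithin] with y hy
  have hy' : y ∈ Set.Ioo c x0 := hy.1
  have h1 : 0 ≤ φ y - φ x0 := sub_nonneg.2 (hmin y hy')
  have h2 : y - x0 < 0 := sub_neg.2 hy'.2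
  rw [slope_def_field]
  exact div_nonpos_of_nonneg_of_nonpos h1 h2.le

private lemma aux_left_gt {φ : ℝ → ℝ} {v x0 : ℝ} (hd : HasDerivAt φ v x0) (hv : v < 0) :
    ∀ᶠ y in 𝓝[<] x0, φ x0 < φ y := by
  have hs := hasDerivWithinAt_iff_tendsto_slope.1 (hd.hasDerivWithinAt (s := Set.Iio x0))
  rw [Set.diff_singleton_eq_self (by simp)] at hs
  filter_upwards [hs.eventually_lt_const hv, self_mem_nhdsWithin] with y h1 h2
  rw [slope_def_field] at h1
  have h3 : y - x0 < 0 := sub_neg.2 h2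
  rcases div_neg_iff.1 h1 with ⟨hnum, _⟩ | ⟨_, hden⟩
  · linarith
  · linarith

private lemma aux_tendsto_sInf {φ : ℝ → ℝ} {u : ℝ} (hu : u < 1)
    (hmono : AntitoneOn φ (Set.Ioo u 1)) (hbdd : BddBelow (φ '' Set.Ioo u 1)) :
    Tendsto φ (𝓝[<] (1:ℝ)) (𝓝 (sInf (φ '' Set.Ioo u 1))) := by
  have hne : (Set.Ioo u 1).Nonempty := Set.nonempty_Ioo.2 hu
  rw [tendsto_order]
  constructor
  · intro b hb
    filter_upwards [Ioo_mem_nhdsLT hu] with x hx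
    exact lt_of_lt_of_le hb (csInf_le hbdd (Set.mem_image_of_mem _ hx))
  · intro b hb
    obtain ⟨y, ⟨x1, hx1, rfl⟩, hlt⟩ := exists_lt_of_csInf_lt (hne.image φ) hb
    filter_upwards [Ioo_mem_nhdsLT hx1.2] with x hx
    exact lt_of_le_of_lt (hmono hx1 ⟨hx1.1.trans hx.1, hx.2⟩ hx.1.le) hlt


set_option maxHeartbeats 1600000 in
/-- If `f ∈ C²([0,1))` is the solution of the profile equation with `f(0) = a > 0`,
`f'(0) = 0`, then `f`, `f'` and `f''` have finite limits as `x → 1⁻`, with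
`0 < lim f < a`, `lim f' < 0` and `lim f'' < 0`. -/
theorem profile_limits_at_one (a : ℝ) (ha : 0 < a)
    (f : ℝ → ℝ) (hf : SolvesProfile a (Ico 0 1) f) :
    (∃ b : ℝ, 0 < b ∧ b < a ∧ Tendsto f (𝓝[Ico (0:ℝ) 1] 1) (𝓝 b)) ∧
    (∃ c : ℝ, c < 0 ∧ Tendsto (derivWithin f (Ico 0 1)) (𝓝[Ico (0:ℝ) 1] 1) (𝓝 c)) ∧
    (∃ d : ℝ, d < 0 ∧
      Tendsto (derivWithin (derivWithin f (Ico 0 1)) (Ico 0 1)) (𝓝[Ico (0:ℝ) 1] 1) (𝓝 d)) := by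
  obtain ⟨hC2, hf0, hg0, hODE⟩ := hf
  set S : Set ℝ := Ico 0 1 with hSdef
  set g : ℝ → ℝ := derivWithin f S with hgdef
  set h : ℝ → ℝ := derivWithin g S with hhdef
  have hS : UniqueDiffOn ℝ S := uniqueDiffOn_Ico 0 1
  have hSconv : Convex ℝ S := convex_Ico 0 1
  have hint : interior S = Ioo (0:ℝ) 1 := interior_Ico
  have hg1 : ContDiffOn ℝ 1 g S := hC2.derivWithin hS (by norm_num)
  have hfc : ContinuousOn f S := hC2.continuousOn
  have hgc : ContinuousOn g S := hg1.continuousOn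
  have hhc : ContinuousOn h S := hg1.continuousOn_derivWithin hS (le_refl _)
  have hmemS : ∀ x ∈ Ioo (0:ℝ) 1, x ∈ S := fun x hx => ⟨hx.1.le, hx.2⟩
  have hnhds : ∀ x ∈ Ioo (0:ℝ) 1, S ∈ 𝓝 x := fun x hx =>
    mem_of_superset (isOpen_Ioo.mem_nhds hx) Ioo_subset_Ico_self
  have hfd : ∀ x ∈ Ioo (0:ℝ) 1, HasDerivAt f (g x) x := by
    intro x hx
    exact ((hC2.differentiableOn (by norm_num) x (hmemS x hx)).hasDerivWithinAt).hasDerivAt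
      (hnhds x hx)
  have hgd : ∀ x ∈ Ioo (0:ℝ) 1, HasDerivAt g (h x) x := by
    intro x hx
    exact ((hg1.differentiableOn one_ne_zero x (hmemS x hx)).hasDerivWithinAt).hasDerivAt
      (hnhds x hx)
  have hODE' : ∀ x ∈ Ioo (0:ℝ) 1, h x = (1 + g x ^ 2) * (g x * (x - 1/x) - f x) :=
    fun x hx => hODE x (hmemS x hx) (ne_of_gt hx.1)
  have hxinv : ∀ x ∈ Ioo (0:ℝ) 1, x - 1/x < 0 := by
    intro x hx
    have h1 : 1 < 1/x := one_lt_one_div hx.1 hx.2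
    linarith [hx.2]
  -- energy
  set M : ℝ := Real.sqrt (Real.exp (a^2) - 1) with hMdef
  have hexpgt : a^2 + 1 < Real.exp (a^2) := by
    have := Real.add_one_lt_exp (x := a^2) (by positivity)
    linarith
  have hM2 : M^2 = Real.exp (a^2) - 1 := Real.sq_sqrt (by nlinarith [sq_nonneg a])
  have hMpos : 0 < M := Real.sqrt_pos.2 (by nlinarith [sq_nonneg a])
  have hE : ∀ x ∈ S, Real.log (1 + g x^2) / 2 + f x^2 / 2 ≤ a^2/2 := by
    have hEd : ∀ x ∈ Ioo (0:ℝ) 1, HasDerivAt (fun y => Real.log (1 + g y^2)/2 + f y^2/2)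
        (g x^2 * (x - 1/x)) x := by
      intro x hx
      have hpos : (0:ℝ) < 1 + g x^2 := by positivity
      have h1 : HasDerivAt (fun y => 1 + g y ^ 2) (2 * g x * h x) x := by
        have := ((hgd x hx).pow 2).const_add (1:ℝ)
        refine this.congr_deriv ?_
        push_cast; ring
      have h4 := ((h1.log hpos.ne').div_const 2).add (((hfd x hx).pow 2).div_const 2)
      refine h4.congr_deriv ?_
      rw [hODE' x hx]
      push_cast
      field_simp
      ring
    have hanti : AntitoneOn (fun y => Real.log (1 + g y^2)/2 + f y^2/2) S := by
      apply antitoneOn_of_deriv_nonpos hSconv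
      · have hc1 : ContinuousOn (fun y => 1 + g y^2) S := continuousOn_const.add (hgc.pow 2)
        exact ((hc1.log (fun x hx => by positivity)).div_const 2).add ((hfc.pow 2).div_const 2)
      · rw [hint]; intro x hx
        exact ((hEd x hx).differentiableAt).differentiableWithinAt
      · rw [hint]; intro x hx
        rw [(hEd x hx).deriv]
        have := hxinv x hx
        nlinarith [sq_nonneg (g x)]
    intro x hx
    have h0S : (0:ℝ) ∈ S := left_mem_Ico.2 one_pos
    have := hanti h0S hx hx.1
    simpa [hg0, hf0] using this
  have hf_le : ∀ x ∈ S, f x ≤ a := by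
    intro x hx
    have h1 := hE x hx
    have h2 : 0 ≤ Real.log (1 + g x^2) := Real.log_nonneg (by nlinarith [sq_nonneg (g x)])
    nlinarith [sq_nonneg (f x - a), sq_nonneg (f x + a)]
  have hg_lb : ∀ x ∈ S, -M ≤ g x := by
    intro x hx
    have h1 := hE x hx
    have h2 : Real.log (1 + g x ^2) ≤ a^2 := by nlinarith [sq_nonneg (f x)]
    have h3 : 1 + g x^2 ≤ Real.exp (a^2) := (Real.log_le_iff_le_exp (by positivity)).1 h2
    have h4 : g x^2 ≤ M^2 := by rw [hM2]; linarith
    nlinarith [hMpos, sq_nonneg (g x + M)]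
    -- derivative of V = f + 2(1-x) g
  have hVd : ∀ x ∈ Ioo (0:ℝ) 1, HasDerivAt (fun y => f y + 2*(1-y)*g y)
      (-(g x) + 2*(1-x)*h x) x := by
    intro x hx
    have h1 : HasDerivAt (fun y : ℝ => 2*(1-y)) (-2) x := by
      have := ((hasDerivAt_id x).const_sub (1:ℝ)).const_mul (2:ℝ)
      refine this.congr_deriv ?_
      ring
    have h2 := (hfd x hx).add (h1.mul (hgd x hx))
    refine h2.congr_deriv ?_
    ring
  have hVcont : ContinuousOn (fun x => f x + 2*(1-x)*g x) S :=
    hfc.add ((continuousOn_const.mul (continuousOn_const.sub continuousOn_id)).mul hgc)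
  -- lower bound via monotonicity of f/sqrt(1-x)
  have hw : ∀ y ∈ Ioo (0:ℝ) 1, (∀ t ∈ Ioo (0:ℝ) y, 0 < f t + 2*(1-t)*g t) →
      a * Real.sqrt (1 - y) ≤ f y := by
    intro y hy hV
    have hsub : Icc (0:ℝ) y ⊆ S := fun t ht => ⟨ht.1, lt_of_le_of_lt ht.2 hy.2⟩
    have hwd : ∀ t ∈ Ioo (0:ℝ) y, HasDerivAt (fun u => f u / Real.sqrt (1-u))
        ((g t * Real.sqrt (1-t) - f t * (-1/(2*Real.sqrt (1-t))))/(Real.sqrt (1-t))^2) t := by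
      intro t ht
      have htI : t ∈ Ioo (0:ℝ) 1 := ⟨ht.1, ht.2.trans hy.2⟩
      have h1t : (0:ℝ) < 1 - t := by linarith [htI.2]
      have hsq : HasDerivAt (fun u : ℝ => Real.sqrt (1-u)) (-1/(2*Real.sqrt (1-t))) t := by
        have := (((hasDerivAt_id t).const_sub (1:ℝ))).sqrt h1t.ne'
        exact this
      exact (hfd t htI).div hsq (Real.sqrt_pos.2 h1t).ne'
    have hmono : MonotoneOn (fun t => f t / Real.sqrt (1 - t)) (Icc 0 y) := by
      apply monotoneOn_of_deriv_nonneg (convex_Icc 0 y)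
      · apply ContinuousOn.div (hfc.mono hsub)
        · exact (continuousOn_const.sub continuousOn_id).sqrt
        · intro t ht
          exact (Real.sqrt_pos.2 (by linarith [lt_of_le_of_lt ht.2 hy.2] : (0:ℝ) < 1 - t)).ne'
      · rw [interior_Icc]; intro t ht
        exact ((hwd t ht).differentiableAt).differentiableWithinAt
      · rw [interior_Icc]; intro t ht
        rw [(hwd t ht).deriv]
        have h1t : (0:ℝ) < 1 - t := by linarith [ht.2, hy.2]
        have hs1 : (0:ℝ) < Real.sqrt (1-t) := Real.sqrt_pos.2 h1t
        have hs2 : Real.sqrt (1-t)^2 = 1 - t := Real.sq_sqrt h1t.le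
        have key : g t * Real.sqrt (1-t) - f t * (-1/(2*Real.sqrt (1-t)))
            = (2*(1-t)*g t + f t)/(2*Real.sqrt (1-t)) := by
          field_simp
          linear_combination 2 * g t * hs2
        rw [key]
        have hVt := hV t ht
        apply div_nonneg
        · apply div_nonneg (by linarith) (by positivity)
        · positivity
    have h0y : (0:ℝ) ∈ Icc (0:ℝ) y := ⟨le_refl _, hy.1.le⟩
    have hyy : y ∈ Icc (0:ℝ) y := ⟨hy.1.le, le_refl _⟩
    have this2 : f 0 / Real.sqrt (1 - 0) ≤ f y / Real.sqrt (1 - y) := hmono h0y hyy hy.1.le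
    have this : a / Real.sqrt 1 ≤ f y / Real.sqrt (1 - y) := by rwa [hf0, sub_zero] at this2
    rw [Real.sqrt_one, div_one] at this
    have hs1 : (0:ℝ) < Real.sqrt (1-y) := Real.sqrt_pos.2 (by linarith [hy.2])
    exact (le_div_iff₀ hs1).1 this
    -- invariant region: f > 0 and V > 0 on S
  have hfVpos : ∀ x ∈ S, 0 < f x ∧ 0 < f x + 2*(1-x)*g x := by
    by_contra hcon
    push_neg at hcon
    obtain ⟨z, hzS, hz⟩ := hcon
    set B : Set ℝ := {x | x ∈ S ∧ (f x ≤ 0 ∨ f x + 2*(1-x)*g x ≤ 0)} with hBdef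
    have hzB : z ∈ B := by
      refine ⟨hzS, ?_⟩
      by_cases h1 : 0 < f z
      · exact Or.inr (hz h1)
      · exact Or.inl (not_lt.1 h1)
    have hBne : B.Nonempty := ⟨z, hzB⟩
    have hbdd : BddBelow B := ⟨0, fun x hx => hx.1.1⟩
    set x0 := sInf B with hx0def
    have h0S : (0:ℝ) ∈ S := left_mem_Ico.2 one_pos
    have hpos0 : ∀ᶠ x in 𝓝[S] 0, 0 < f x ∧ 0 < f x + 2*(1-x)*g x := by
      have e1 : ∀ᶠ x in 𝓝[S] 0, 0 < f x :=
        (hfc 0 h0S).eventually_const_lt (by rw [hf0]; exact ha)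
      have e2 : ∀ᶠ x in 𝓝[S] 0, 0 < f x + 2*(1-x)*g x :=
        (hVcont 0 h0S).eventually_const_lt
          (by show (0:ℝ) < f 0 + 2*(1-(0:ℝ))*g 0; rw [hf0, hg0]; norm_num; exact ha)
      exact e1.and e2
    have hx0pos : 0 < x0 := by
      obtain ⟨ε, hε, hsub2⟩ := Metric.mem_nhdsWithin_iff.1 hpos0
      have : ∀ y ∈ B, ε/2 ≤ y := by
        intro y hy
        by_contra hy2
        push_neg at hy2
        have hy0 : 0 ≤ y := hy.1.1
        have hyball : y ∈ Metric.ball (0:ℝ) ε := by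
          rw [Metric.mem_ball, Real.dist_eq, sub_zero, abs_of_nonneg hy0]
          linarith
        have h3 := hsub2 ⟨hyball, hy.1⟩
        rcases hy.2 with h4 | h4 <;> [linarith [h3.1]; linarith [h3.2]]
      linarith [le_csInf hBne this, hε]
    have hx0lt : x0 < 1 := lt_of_le_of_lt (csInf_le hbdd hzB) hzS.2
    have hx0S : x0 ∈ S := ⟨hx0pos.le, hx0lt⟩
    have hleft : ∀ t, 0 ≤ t → t < x0 → 0 < f t ∧ 0 < f t + 2*(1-t)*g t := by
      intro t ht1 ht2
      by_contra hcon2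
      have htB : t ∈ B := by
        refine ⟨⟨ht1, ht2.trans hx0lt⟩, ?_⟩
        push_neg at hcon2
        by_cases h1 : 0 < f t
        · exact Or.inr (hcon2 h1)
        · exact Or.inl (not_lt.1 h1)
      exact absurd (csInf_le hbdd htB) (not_le.2 ht2)
    have hfx0 : a * Real.sqrt (1 - x0) ≤ f x0 :=
      hw x0 ⟨hx0pos, hx0lt⟩ (fun t ht => (hleft t ht.1.le ht.2).2)
    have hfx0pos : 0 < f x0 := by
      have : (0:ℝ) < a * Real.sqrt (1 - x0) := by
        have : (0:ℝ) < Real.sqrt (1 - x0) := Real.sqrt_pos.2 (by linarith)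
        positivity
      linarith
    have hx0cl : x0 ∈ closure B := csInf_mem_closure hBne hbdd
    have hVx0le : f x0 + 2*(1-x0)*g x0 ≤ 0 := by
      have hBeq : B = {x | x ∈ S ∧ f x ≤ 0} ∪ {x | x ∈ S ∧ f x + 2*(1-x)*g x ≤ 0} := by
        ext x
        simp only [hBdef, mem_setOf_eq, mem_union]
        tauto
      rw [hBeq, closure_union] at hx0cl
      rcases hx0cl with hc1 | hc2
      · exfalso
        have hnb : (𝓝[{x | x ∈ S ∧ f x ≤ 0}] x0).NeBot := mem_closure_iff_nhdsWithin_neBot.1 hc1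
        have ht : Tendsto f (𝓝[{x | x ∈ S ∧ f x ≤ 0}] x0) (𝓝 (f x0)) :=
          (hfc x0 hx0S).mono_left (nhdsWithin_mono _ (fun x hx => hx.1))
        have := le_of_tendsto ht (eventually_nhdsWithin_of_forall (fun x hx => hx.2))
        linarith
      · have hnb : (𝓝[{x | x ∈ S ∧ f x + 2*(1-x)*g x ≤ 0}] x0).NeBot :=
          mem_closure_iff_nhdsWithin_neBot.1 hc2
        have ht : Tendsto (fun x => f x + 2*(1-x)*g x)
            (𝓝[{x | x ∈ S ∧ f x + 2*(1-x)*g x ≤ 0}] x0) (𝓝 (f x0 + 2*(1-x0)*g x0)) :=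
          (hVcont x0 hx0S).mono_left (nhdsWithin_mono _ (fun x hx => hx.1))
        exact le_of_tendsto ht (eventually_nhdsWithin_of_forall (fun x hx => hx.2))
    have hVx0ge : 0 ≤ f x0 + 2*(1-x0)*g x0 := by
      have hnb : (𝓝[Ioo (0:ℝ) x0] x0).NeBot := by
        rw [← mem_closure_iff_nhdsWithin_neBot, closure_Ioo hx0pos.ne]
        exact ⟨hx0pos.le, le_refl _⟩
      have hsub3 : Ioo (0:ℝ) x0 ⊆ S := fun t ht => ⟨ht.1.le, ht.2.trans hx0lt⟩
      have ht : Tendsto (fun x => f x + 2*(1-x)*g x) (𝓝[Ioo (0:ℝ) x0] x0)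
          (𝓝 (f x0 + 2*(1-x0)*g x0)) :=
        (hVcont x0 hx0S).mono_left (nhdsWithin_mono _ hsub3)
      exact ge_of_tendsto ht
        (eventually_nhdsWithin_of_forall (fun t ht' => (hleft t ht'.1.le ht'.2).2.le))
    have hVx0 : f x0 + 2*(1-x0)*g x0 = 0 := le_antisymm hVx0le hVx0ge
    have hgx0neg : g x0 < 0 := by nlinarith
    have hdV := hVd x0 ⟨hx0pos, hx0lt⟩
    have hvle : -(g x0) + 2*(1-x0)*h x0 ≤ 0 := by
      apply aux_nonpos_of_left_min hx0pos hdV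
      intro y hy
      show f x0 + 2*(1-x0)*g x0 ≤ f y + 2*(1-y)*g y
      rw [hVx0]
      exact (hleft y hy.1.le hy.2).2.le
    have hvpos : 0 < -(g x0) + 2*(1-x0)*h x0 := by
      have hODEx := hODE' x0 ⟨hx0pos, hx0lt⟩
      have hx0ne : x0 ≠ 0 := hx0pos.ne'
      have key : x0 - 1/x0 + 2*(1-x0) = -((1-x0)^2)/x0 := by field_simp; ring
      have hsqpos : (0:ℝ) < (1-x0)^2 := pow_pos (by linarith) 2
      have h6 : x0 - 1/x0 + 2*(1-x0) < 0 := by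
        rw [key]; exact div_neg_of_neg_of_pos (by linarith) hx0pos
      have h7 : h x0 = (1 + g x0^2) * (g x0 * (x0 - 1/x0 + 2*(1-x0))) := by
        rw [hODEx]
        have hfeq : f x0 = -(2*(1-x0)*g x0) := by linarith
        rw [hfeq]; ring
      rw [h7]
      have h8 : 0 < g x0 * (x0 - 1/x0 + 2*(1-x0)) := mul_pos_of_neg_of_neg hgx0neg h6
      have h9 : 0 < (1 + g x0^2) * (g x0 * (x0 - 1/x0 + 2*(1-x0))) := mul_pos (by positivity) h8
      have h10 : 0 < 2*(1-x0) * ((1 + g x0^2) * (g x0 * (x0 - 1/x0 + 2*(1-x0)))) :=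
        mul_pos (by linarith) h9
      linarith
    linarith
  have hfpos : ∀ x ∈ S, 0 < f x := fun x hx => (hfVpos x hx).1
  have hflb : ∀ x ∈ S, a * Real.sqrt (1 - x) ≤ f x := by
    intro x hx
    rcases eq_or_lt_of_le hx.1 with heq | hlt
    · rw [← heq, hf0, sub_zero, Real.sqrt_one, mul_one]
    · exact hw x ⟨hlt, hx.2⟩ (fun t ht => (hfVpos t ⟨ht.1.le, ht.2.trans hx.2⟩).2)
    -- g < 0 on (0,1)
  have hgneg : ∀ x ∈ Ioo (0:ℝ) 1, g x < 0 := by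
    have hstep1 : ∀ x ∈ Ioo (0:ℝ) 1, g x ≤ 0 := by
      by_contra hcon
      push_neg at hcon
      obtain ⟨z, hz, hgz⟩ := hcon
      set A : Set ℝ := {x | x ∈ Icc 0 z ∧ g x ≤ 0} with hAdef
      have hA0 : (0:ℝ) ∈ A := ⟨⟨le_refl _, hz.1.le⟩, hg0.le⟩
      have hAbdd : BddAbove A := ⟨z, fun x hx => hx.1.2⟩
      set x1 := sSup A with hx1def
      have hx1mem : x1 ∈ Icc (0:ℝ) z := ⟨le_csSup hAbdd hA0, csSup_le ⟨0, hA0⟩ (fun x hx => hx.1.2)⟩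
      have hx1S : x1 ∈ S := ⟨hx1mem.1, lt_of_le_of_lt hx1mem.2 hz.2⟩
      have hgx1 : g x1 ≤ 0 := by
        have hcl : x1 ∈ closure A := csSup_mem_closure ⟨0, hA0⟩ hAbdd
        have hnb : (𝓝[A] x1).NeBot := mem_closure_iff_nhdsWithin_neBot.1 hcl
        have ht : Tendsto g (𝓝[A] x1) (𝓝 (g x1)) :=
          (hgc x1 hx1S).mono_left (nhdsWithin_mono _
            (fun x hx => ⟨hx.1.1, lt_of_le_of_lt hx.1.2 hz.2⟩))
        exact le_of_tendsto ht (eventually_nhdsWithin_of_forall (fun x hx => hx.2))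
      have hx1z : x1 < z := lt_of_le_of_ne hx1mem.2 (fun he => by rw [he] at hgx1; linarith)
      have hmid : ∀ t, x1 < t → t ≤ z → 0 < g t := by
        intro t ht1 ht2
        by_contra hc2
        push_neg at hc2
        have : t ∈ A := ⟨⟨hx1mem.1.trans ht1.le, ht2⟩, hc2⟩
        exact absurd (le_csSup hAbdd this) (not_le.2 ht1)
      have hanti : StrictAntiOn g (Icc x1 z) := by
        apply strictAntiOn_of_deriv_neg (convex_Icc x1 z)
        · exact hgc.mono (fun t ht => ⟨hx1mem.1.trans ht.1, lt_of_le_of_lt ht.2 hz.2⟩)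
        · rw [interior_Icc]
          intro t ht
          have htI : t ∈ Ioo (0:ℝ) 1 := ⟨lt_of_le_of_lt hx1mem.1 ht.1, lt_trans ht.2 hz.2⟩
          rw [(hgd t htI).deriv, hODE' t htI]
          have h1 := hmid t ht.1 ht.2.le
          have h2 := hxinv t htI
          have h3 := hfpos t (hmemS t htI)
          have h4 : g t * (t - 1/t) < 0 := mul_neg_of_pos_of_neg h1 h2
          exact mul_neg_of_pos_of_neg (by positivity) (by linarith)
      have := hanti ⟨le_refl _, hx1z.le⟩ ⟨hx1z.le, le_refl _⟩ hx1z
      have hgz2 := hmid z hx1z (le_refl _)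
      linarith [hgx1]
    intro x hx
    rcases lt_or_eq_of_le (hstep1 x hx) with hlt | heq
    · exact hlt
    · exfalso
      have hhx : h x < 0 := by
        have h3 := hfpos x (hmemS x hx)
        have h4 : h x = -f x := by rw [hODE' x hx, heq]; ring
        rw [h4]; linarith
      have hev := aux_left_gt (hgd x hx) hhx
      have hev2 : ∀ᶠ y in 𝓝[<] x, y ∈ Ioo (0:ℝ) x :=
        eventually_mem_set.2 (Ioo_mem_nhdsLT hx.1)
      obtain ⟨y, hy1, hy2⟩ := (hev.and hev2).exists
      have : g y ≤ 0 := hstep1 y ⟨hy2.1, hy2.2.trans hx.2⟩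
      rw [heq] at hy1
      linarith
  -- f strictly decreasing
  have hfanti : StrictAntiOn f S := by
    apply strictAntiOn_of_deriv_neg hSconv hfc
    rw [hint]
    intro x hx
    rw [(hfd x hx).deriv]
    exact hgneg x hx
  -- filter equality
  have hfilter : 𝓝[Ico (0:ℝ) 1] (1:ℝ) = 𝓝[<] (1:ℝ) := by
    apply nhdsWithin_eq_nhdsWithin' (Ioi_mem_nhds one_pos)
    ext x
    simp only [mem_inter_iff, mem_Ico, mem_Ioi, mem_Iio]
    constructor
    · rintro ⟨⟨_, h2⟩, h3⟩; exact ⟨h2, h3⟩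
    · rintro ⟨h2, h3⟩; exact ⟨⟨h3.le, h2⟩, h3⟩
  -- limit of f
  have hmono_f : AntitoneOn f (Ioo (0:ℝ) 1) := (hfanti.antitoneOn).mono Ioo_subset_Ico_self
  have hbdd_f : BddBelow (f '' Ioo (0:ℝ) 1) :=
    ⟨0, by rintro y ⟨x, hx, rfl⟩; exact (hfpos x (hmemS x hx)).le⟩
  set b := sInf (f '' Ioo (0:ℝ) 1) with hbdef
  have htb : Tendsto f (𝓝[<] (1:ℝ)) (𝓝 b) := aux_tendsto_sInf one_pos hmono_f hbdd_f
  -- uniform positive lower bound m for f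
  set ε : ℝ := min ((a / (2*(M+1)))^2) (1/2) with hedef
  have hεpos : 0 < ε := lt_min (by positivity) (by norm_num)
  have hεle : ε ≤ 1/2 := min_le_right _ _
  have hsε : 0 < Real.sqrt ε := Real.sqrt_pos.2 hεpos
  have hse : Real.sqrt ε * Real.sqrt ε = ε := Real.mul_self_sqrt hεpos.le
  have hsqrtε : Real.sqrt ε ≤ a/(2*(M+1)) := by
    have h1 : Real.sqrt ε ≤ Real.sqrt ((a / (2*(M+1)))^2) :=
      Real.sqrt_le_sqrt (min_le_left _ _)
    rwa [Real.sqrt_sq (by positivity)] at h1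
  set x2 : ℝ := 1 - ε with hx2def
  have hx2mem : x2 ∈ Ioo (0:ℝ) 1 := ⟨by simp only [hx2def]; linarith, by simp only [hx2def]; linarith⟩
  set m : ℝ := a * Real.sqrt ε - M * ε with hmdef
  have hmpos : 0 < m := by
    have hM1 : (0:ℝ) < M + 1 := by linarith
    have h1 : (M+1) * Real.sqrt ε ≤ a/2 := by
      have h2 := mul_le_mul_of_nonneg_left hsqrtε hM1.le
      calc (M+1)*Real.sqrt ε ≤ (M+1)*(a/(2*(M+1))) := h2
        _ = a/2 := by field_simp [hM1.ne']
    have h3 : M * ε < a * Real.sqrt ε := by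
      have s1 : M * ε = (M * Real.sqrt ε) * Real.sqrt ε := by rw [mul_assoc, hse]
      have s2 : M * Real.sqrt ε < (M+1) * Real.sqrt ε := by nlinarith
      have s3 : (M * Real.sqrt ε) * Real.sqrt ε ≤ (a/2) * Real.sqrt ε := by nlinarith
      have s4 : (a/2) * Real.sqrt ε < a * Real.sqrt ε := by nlinarith
      linarith [s1.le, s3, s4]
    simp only [hmdef]; linarith
  have hkmono : MonotoneOn (fun x => f x + M * x) S := by
    apply monotoneOn_of_deriv_nonneg hSconv (hfc.add (continuousOn_const.mul continuousOn_id))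
    · rw [hint]
      intro x hx
      exact ((hfd x hx).add ((hasDerivAt_id x).const_mul M)).differentiableAt.differentiableWithinAt
    · rw [hint]
      intro x hx
      change 0 ≤ deriv (f + (fun _ => M) * id) x
      rw [(((hfd x hx).add ((hasDerivAt_id x).const_mul M)) : HasDerivAt (f + (fun _ => M) * id) (g x + M * 1) x).deriv]
      have := hg_lb x (hmemS x hx)
      linarith
  have hflow : ∀ x ∈ Ioo (0:ℝ) 1, m ≤ f x := by
    intro x hx
    rcases le_or_gt x x2 with hle | hlt
    · have h1 := hflb x (hmemS x hx)
      have h2 : Real.sqrt ε ≤ Real.sqrt (1-x) := Real.sqrt_le_sqrt (by simp only [hx2def] at hle; linarith)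
      have h3 : 0 ≤ M * ε := by positivity
      have h4 : a * Real.sqrt ε ≤ a * Real.sqrt (1-x) := by nlinarith
      simp only [hmdef]; linarith
    · have h1 := hkmono (hmemS x2 hx2mem) (hmemS x hx) hlt.le
      have h2 := hflb x2 (hmemS x2 hx2mem)
      have h3 : Real.sqrt (1-x2) = Real.sqrt ε := by rw [hx2def]; ring_nf
      rw [h3] at h2
      have hx1' : x < 1 := hx.2
      have hx2e : x2 = 1 - ε := hx2def
      have h1' : f x2 + M * x2 ≤ f x + M * x := h1
      have h6 : M * x ≤ M * x2 + M * ε := by nlinarith [hMpos.le]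
      simp only [hmdef]
      linarith
  have hbm : m ≤ b := le_csInf ((nonempty_Ioo.2 one_pos).image f)
    (by rintro y ⟨x, hx, rfl⟩; exact hflow x hx)
  have hbpos : 0 < b := lt_of_lt_of_le hmpos hbm
  have hba : b < a := by
    have hhalfS : (1/2:ℝ) ∈ S := by constructor <;> norm_num
    have h1 : b ≤ f (1/2) := csInf_le hbdd_f (mem_image_of_mem f (by constructor <;> norm_num))
    have h2 : f (1/2) < f 0 := hfanti (left_mem_Ico.2 one_pos) hhalfS (by norm_num)
    rw [hf0] at h2
    linarith
    -- q = arctan (g) - M log x + M x^2/2 is antitone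
  have hqd : ∀ x ∈ Ioo (0:ℝ) 1, HasDerivAt (fun y => Real.arctan (g y) - M * Real.log y + M * y^2/2)
      (h x/(1 + g x^2) - M * x⁻¹ + M * (2*x)/2) x := by
    intro x hx
    have h1 := (hgd x hx).arctan
    have h2 := (Real.hasDerivAt_log hx.1.ne').const_mul M
    have h3 := (((hasDerivAt_id x).pow 2).const_mul M).div_const 2
    have h4 := (h1.sub h2).add h3
    refine h4.congr_deriv ?_
    push_cast
    simp only [id_eq]
    ring
  have hqanti : AntitoneOn (fun y => Real.arctan (g y) - M * Real.log y + M * y^2/2)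
      (Ioo (0:ℝ) 1) := by
    apply antitoneOn_of_deriv_nonpos (convex_Ioo 0 1)
    · apply ContinuousOn.add
      · apply ContinuousOn.sub
        · exact Real.continuous_arctan.comp_continuousOn (hgc.mono Ioo_subset_Ico_self)
        · exact continuousOn_const.mul (Real.continuousOn_log.mono (fun x hx => ne_of_gt hx.1))
      · exact (continuousOn_const.mul (continuousOn_id.pow 2)).div_const 2
    · rw [isOpen_Ioo.interior_eq]
      intro x hx
      exact ((hqd x hx).differentiableAt).differentiableWithinAt
    · rw [isOpen_Ioo.interior_eq]
      intro x hx
      rw [(hqd x hx).deriv]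
      have hgpos : (0:ℝ) < 1 + g x^2 := by positivity
      have h1 : h x/(1+g x^2) = g x*(x - 1/x) - f x := by
        rw [hODE' x hx]
        field_simp
      rw [h1]
      have h2 := hg_lb x (hmemS x hx)
      have h3 := hxinv x hx
      have h4 := hfpos x (hmemS x hx)
      have h5 : (g x + M) * (x - 1/x) ≤ 0 :=
        mul_nonpos_of_nonneg_of_nonpos (by linarith) h3.le
      have hxne : x ≠ 0 := hx.1.ne'
      have h6 : M * x⁻¹ = M * (1/x) := by rw [one_div]
      nlinarith [h5]
  set q : ℝ → ℝ := fun y => Real.arctan (g y) - M * Real.log y + M * y^2/2 with hqdef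
  have hqbdd : BddBelow (q '' Ioo (0:ℝ) 1) := by
    refine ⟨-(Real.pi/2), ?_⟩
    rintro y ⟨x, hx, rfl⟩
    have h1 : -(Real.pi/2) < Real.arctan (g x) := Real.neg_pi_div_two_lt_arctan _
    have h2 : Real.log x ≤ 0 := Real.log_nonpos hx.1.le hx.2.le
    have h3 : 0 ≤ M * x^2/2 := by positivity
    have h4 : 0 ≤ -(M * Real.log x) := by nlinarith [hMpos.le]
    show -(Real.pi/2) ≤ Real.arctan (g x) - M * Real.log x + M * x^2/2
    linarith
  set Lq := sInf (q '' Ioo (0:ℝ) 1) with hLqdef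
  have htq : Tendsto q (𝓝[<] (1:ℝ)) (𝓝 Lq) := aux_tendsto_sInf one_pos hqanti hqbdd
  have hlog1 : Tendsto (fun x : ℝ => M * Real.log x - M * x^2/2) (𝓝[<] (1:ℝ))
      (𝓝 (M * Real.log 1 - M * 1^2/2)) := by
    have hc : ContinuousAt (fun x : ℝ => M * Real.log x - M * x^2/2) 1 := by
      apply ContinuousAt.sub
      · exact continuousAt_const.mul (Real.continuousAt_log one_ne_zero)
      · exact (continuousAt_const.mul (continuousAt_id.pow 2)).div_const 2
    exact hc.tendsto.mono_left nhdsWithin_le_nhds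
  set L := Lq - M/2 with hLdef
  have htarctan : Tendsto (fun x => Real.arctan (g x)) (𝓝[<] (1:ℝ)) (𝓝 L) := by
    have h1 := htq.add hlog1
    have h2 : (fun x => q x + (M * Real.log x - M * x^2/2)) = fun x => Real.arctan (g x) := by
      funext x
      simp only [hqdef]
      ring
    rw [h2] at h1
    have h3 : Lq + (M * Real.log 1 - M * 1^2/2) = L := by
      rw [Real.log_one, hLdef]
      ring
    rwa [h3] at h1
  have hglt : ∀ᶠ x in 𝓝[<] (1:ℝ), x ∈ Ioo (0:ℝ) 1 :=
    eventually_mem_set.2 (Ioo_mem_nhdsLT one_pos)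
  have hLlb : -(Real.pi/2) < L := by
    have h1 : Real.arctan (-M) ≤ L := by
      apply ge_of_tendsto htarctan
      filter_upwards [hglt] with x hx
      exact Real.arctan_strictMono.monotone (hg_lb x (hmemS x hx))
    have h2 := Real.arctan_lt_pi_div_two M
    rw [Real.arctan_neg] at h1
    exact lt_of_lt_of_le (by linarith) h1
  have hLub : L ≤ 0 := by
    apply le_of_tendsto htarctan
    filter_upwards [hglt] with x hx
    have := Real.arctan_strictMono.monotone (hgneg x hx).le
    rwa [Real.arctan_zero] at this
  have hcosL : Real.cos L ≠ 0 := by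
    have := Real.cos_pos_of_mem_Ioo (show L ∈ Ioo (-(Real.pi/2)) (Real.pi/2) from
      ⟨hLlb, lt_of_le_of_lt hLub (by positivity)⟩)
    exact this.ne'
  set c := Real.tan L with hcdef
  have htg : Tendsto g (𝓝[<] (1:ℝ)) (𝓝 c) := by
    have h1 : Tendsto (Real.tan ∘ fun x => Real.arctan (g x)) (𝓝[<] (1:ℝ)) (𝓝 (Real.tan L)) :=
      (Real.continuousAt_tan.2 hcosL).tendsto.comp htarctan
    have h2 : (Real.tan ∘ fun x => Real.arctan (g x)) = g := by
      funext x
      simp [Function.comp, Real.tan_arctan]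
    rwa [h2] at h1
  -- limit of h
  set d := -(1 + c^2) * b with hddef
  have htx : Tendsto (fun x : ℝ => x) (𝓝[<] (1:ℝ)) (𝓝 1) :=
    (continuous_id.tendsto 1).mono_left nhdsWithin_le_nhds
  have htinv : Tendsto (fun x : ℝ => 1/x) (𝓝[<] (1:ℝ)) (𝓝 1) := by
    have hc : ContinuousAt (fun x : ℝ => 1/x) 1 := continuousAt_const.div continuousAt_id one_ne_zero
    have := hc.tendsto.mono_left (nhdsWithin_le_nhds (a := (1:ℝ)) (s := Iio 1))
    simpa using this
  have hth : Tendsto h (𝓝[<] (1:ℝ)) (𝓝 d) := by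
    have h1 : Tendsto (fun x => (1 + g x^2)*(g x*(x - 1/x) - f x)) (𝓝[<] (1:ℝ))
        (𝓝 ((1 + c^2)*(c*((1:ℝ) - 1) - b))) :=
      (tendsto_const_nhds.add (htg.pow 2)).mul ((htg.mul (htx.sub htinv)).sub htb)
    have h2 : (1 + c^2)*(c*((1:ℝ) - 1) - b) = d := by
      rw [hddef]; ring
    rw [h2] at h1
    apply h1.congr'
    filter_upwards [hglt] with x hx
    exact (hODE' x hx).symm
  have hdneg : d < 0 := by
    rw [hddef]
    nlinarith [hbpos, sq_nonneg c]
  -- c < 0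
  have hcneg : c < 0 := by
    have hev : ∀ᶠ x in 𝓝[<] (1:ℝ), h x < d/2 := hth.eventually_lt_const (by linarith)
    obtain ⟨u, hu1, hu2⟩ := mem_nhdsLT_iff_exists_Ioo_subset.1 hev
    set u' := max u (1/2) with hu'def
    have hu'1 : u' < 1 := max_lt hu1 (by norm_num)
    have hu'0 : (0:ℝ) < u' := lt_of_lt_of_le (by norm_num) (le_max_right _ _)
    set x3 := (u' + 1)/2 with hx3def
    have hx3u : u' < x3 := by rw [hx3def]; linarith
    have hx3lt : x3 < 1 := by rw [hx3def]; linarith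
    have hx3I : x3 ∈ Ioo (0:ℝ) 1 := ⟨by rw [hx3def]; linarith, hx3lt⟩
    have hanti3 : AntitoneOn g (Ico x3 1) := by
      apply antitoneOn_of_deriv_nonpos (convex_Ico x3 1)
      · exact hgc.mono (fun t ht => ⟨by linarith [ht.1, hx3I.1], ht.2⟩)
      · rw [interior_Ico]
        intro t ht
        have htI : t ∈ Ioo (0:ℝ) 1 := ⟨by linarith [ht.1, hx3I.1], ht.2⟩
        exact (hgd t htI).differentiableAt.differentiableWithinAt
      · rw [interior_Ico]
        intro t ht
        have htI : t ∈ Ioo (0:ℝ) 1 := ⟨by linarith [ht.1, hx3I.1], ht.2⟩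
        rw [(hgd t htI).deriv]
        have h7 : t ∈ Ioo u 1 := ⟨by linarith [ht.1, le_max_left u (1/2:ℝ)], ht.2⟩
        have h8 : h t < d/2 := hu2 h7
        linarith
    have hcle : c ≤ g x3 := by
      apply le_of_tendsto htg
      filter_upwards [eventually_mem_set.2 (Ioo_mem_nhdsLT hx3lt)] with x hx
      exact hanti3 ⟨le_refl _, hx3lt⟩ ⟨hx.1.le, hx.2⟩ hx.1.le
    exact lt_of_le_of_lt hcle (hgneg x3 hx3I)
  -- assemble
  rw [hfilter]
  exact ⟨⟨b, hbpos, hba, htb⟩, ⟨c, hcneg, htg⟩, ⟨d, hdneg, hth⟩⟩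
end

section
/- Let a > 0, δ > 0, and let f ∈ C²([0, 1+δ]) be a solution of the profile equation on (0, 1+δ] with f(0) = a, f'(0) = 0, satisfying f(x) > 0, f'(x) < 0, f''(x) < 0 for all x ∈ (0, 1+δ]. Then (f(x) - x f'(x)) / √(1 + f'(x)²) ≥ a / √(1 + a²) for all x ∈ [0,1]. -/
open Set

/-- If `f ∈ C²([0, 1+δ])` solves the profile equation with `f(0) = a > 0`, `f'(0) = 0`,
and `f > 0`, `f' < 0`, `f'' < 0` on `(0, 1+δ]`, then
`(f(x) - x f'(x)) / √(1 + f'(x)²) ≥ a / √(1 + a²)` for all `x ∈ [0, 1]`. -/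
theorem profile_transversality (a δ : ℝ) (ha : 0 < a) (hδ : 0 < δ)
    (f : ℝ → ℝ) (hf : SolvesProfile a (Icc 0 (1 + δ)) f)
    (hsigns : ∀ x ∈ Ioc (0:ℝ) (1 + δ),
      0 < f x ∧ derivWithin f (Icc 0 (1 + δ)) x < 0 ∧
      derivWithin (derivWithin f (Icc 0 (1 + δ))) (Icc 0 (1 + δ)) x < 0) :
    ∀ x ∈ Icc (0:ℝ) 1,
      (f x - x * derivWithin f (Icc 0 (1 + δ)) x)
          / Real.sqrt (1 + (derivWithin f (Icc 0 (1 + δ)) x) ^ 2)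
        ≥ a / Real.sqrt (1 + a ^ 2) := by
  intro x hx
  have h01 : (0:ℝ) < 1 + δ := by linarith
  set S : Set ℝ := Icc 0 (1 + δ) with hSdef
  have hUD : UniqueDiffOn ℝ S := uniqueDiffOn_Icc h01
  obtain ⟨hC2, hf0, hf'0, _⟩ := hf
  set g : ℝ → ℝ := derivWithin f S with hg
  have hgC : ContinuousOn g S := (hC2.derivWithin (m := 1) hUD (by norm_num)).continuousOn
  have hfC : ContinuousOn f S := hC2.continuousOn
  have hdiff : ∀ y ∈ Ioo (0:ℝ) (1 + δ), HasDerivAt f (g y) y := by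
    intro y hy
    have hmem : S ∈ nhds y := Icc_mem_nhds hy.1 hy.2
    have hda : DifferentiableAt ℝ f y :=
      ((hC2.differentiableOn (by norm_num)) y ⟨le_of_lt hy.1, le_of_lt hy.2⟩).differentiableAt hmem
    have hd : derivWithin f S y = deriv f y := derivWithin_of_mem_nhds hmem
    rw [hg, hd]
    exact hda.hasDerivAt
  have hanti : StrictAntiOn g S := by
    apply strictAntiOn_of_deriv_neg (convex_Icc _ _) hgC
    intro y hy
    rw [interior_Icc] at hy
    have hmem : S ∈ nhds y := Icc_mem_nhds hy.1 hy.2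
    have h2 := (hsigns y ⟨hy.1, le_of_lt hy.2⟩).2.2
    rwa [derivWithin_of_mem_nhds hmem] at h2
  have hx1 : x ≤ 1 := hx.2
  have hx0 : 0 ≤ x := hx.1
  have hxS : x ∈ S := ⟨hx0, by linarith⟩
  have h1S : (1:ℝ) ∈ S := ⟨by norm_num, by linarith⟩
  -- s ≤ 0
  have hs0 : g x ≤ 0 := by
    rcases eq_or_lt_of_le hx0 with h | h
    · rw [← h]; exact le_of_eq hf'0
    · exact le_of_lt (hsigns x ⟨h, by linarith⟩).2.1
  -- N ≥ a
  have hN : a ≤ f x - x * g x := by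
    rcases eq_or_lt_of_le hx0 with h | h
    · rw [← h]; simp [hf0]
    · obtain ⟨c, hc, hceq⟩ := exists_hasDerivAt_eq_slope f g h
        (hfC.mono (Icc_subset_Icc le_rfl (by linarith)))
        (fun y hy => hdiff y ⟨hy.1, by linarith [hy.2]⟩)
      have hcS : c ∈ S := ⟨le_of_lt hc.1, by linarith [hc.2]⟩
      have hlt : g x < g c := hanti hcS hxS hc.2
      rw [hf0, eq_div_iff (sub_ne_zero.mpr (ne_of_gt h))] at hceq
      nlinarith [hceq, hlt, h]
  -- N + s > 0
  have hB : 0 < (f x - x * g x) + g x := by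
    rcases eq_or_lt_of_le hx1 with h | h
    · have hf1 : 0 < f 1 := (hsigns 1 ⟨one_pos, by linarith⟩).1
      rw [h]; linarith
    · obtain ⟨c, hc, hceq⟩ := exists_hasDerivAt_eq_slope f g h
        (hfC.mono (Icc_subset_Icc hx0 (by linarith)))
        (fun y hy => hdiff y ⟨lt_of_le_of_lt hx0 hy.1, by linarith [hy.2]⟩)
      have hcS : c ∈ S := ⟨by linarith [hc.1], by linarith [hc.2]⟩
      have hlt : g c < g x := hanti hxS hcS hc.1
      have hf1 : 0 < f 1 := (hsigns 1 ⟨one_pos, by linarith⟩).1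
      rw [eq_div_iff (ne_of_gt (by linarith : (0:ℝ) < 1 - x))] at hceq
      nlinarith [hceq, hlt, hf1, h]
  -- conclusion
  set N : ℝ := f x - x * g x with hNdef
  have hNpos : 0 < N := lt_of_lt_of_le ha hN
  have hs2 : g x ^ 2 < N ^ 2 := by nlinarith
  have hA : 0 < Real.sqrt (1 + a ^ 2) := Real.sqrt_pos.2 (by positivity)
  have hBpos : 0 < Real.sqrt (1 + g x ^ 2) := Real.sqrt_pos.2 (by positivity)
  have hA2 : Real.sqrt (1 + a ^ 2) ^ 2 = 1 + a ^ 2 := Real.sq_sqrt (by positivity)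
  have hB2 : Real.sqrt (1 + g x ^ 2) ^ 2 = 1 + g x ^ 2 := Real.sq_sqrt (by positivity)
  rw [ge_iff_le, div_le_div_iff₀ hA hBpos]
  have hkey : (a * Real.sqrt (1 + g x ^ 2)) ^ 2 ≤ (N * Real.sqrt (1 + a ^ 2)) ^ 2 := by
    have e1 : (a * Real.sqrt (1 + g x ^ 2)) ^ 2 = a ^ 2 * (1 + g x ^ 2) := by
      rw [mul_pow, hB2]
    have e2 : (N * Real.sqrt (1 + a ^ 2)) ^ 2 = N ^ 2 * (1 + a ^ 2) := by
      rw [mul_pow, hA2]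
    rw [e1, e2]
    nlinarith [hs2, hN, ha, sq_nonneg a]
  nlinarith [hkey, mul_pos hNpos hA, mul_pos (mul_pos ha hBpos) (mul_pos hNpos hA)]
end
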